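/- Let D be a DAG and let u → v be a covered edge of D. Then the graph D' obtained from D by reversing the edge u → v is a DAG. -/

import Mathlib

def Acyclic {V : Type*} (E : V → V → Prop) : Prop :=
  ∀ v, ¬ Relation.TransGen E v v

/-- Parents of `j` in the graph `E`. -/
def pa {V : Type*} (E : V → V → Prop) (j : V) : Set V := {i | E i j}

/-- The edge `u → v` is covered in `E`: it is an edge and `{u} ∪ pa(u) = pa(v)`. -/
def CoveredEdge {V : Type*} (E : V → V → Prop) (u v : V) : Prop :=
  E u v ∧ insert u (pa E u) = pa E v

def reverseEdge {V : Type*} (E : V → V → Prop) (u v : V) : V → V → Prop :=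
  fun a b => (E a b ∧ ¬ (a = u ∧ b = v)) ∨ (a = v ∧ b = u)

/-- Reversing a covered edge of a DAG yields a DAG. -/
theorem reverse_covered_edge_acyclic {V : Type*} (E : V → V → Prop)
    (hE : Acyclic E) (u v : V) (hcov : CoveredEdge E u v) :
    Acyclic (reverseEdge E u v) := by
  obtain ⟨huv, hpa⟩ := hcov
  set F : V → V → Prop := fun a b => E a b ∧ ¬ (a = u ∧ b = v) with hF
  have hFE : ∀ a b, F a b → E a b := fun a b h => h.1
  have hmonoT : ∀ {a b}, Relation.TransGen F a b → Relation.TransGen E a b := by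
    intro a b h
    exact Relation.TransGen.mono hFE _ _ h
  have hmonoR : ∀ {a b}, Relation.ReflTransGen F a b → Relation.ReflTransGen E a b := by
    intro a b h
    exact Relation.ReflTransGen.mono hFE _ _ h
  have hne : u ≠ v := by
    intro h
    exact hE u (Relation.TransGen.single (h ▸ huv))
  -- decomposition lemma
  have key : ∀ {x y}, Relation.TransGen (reverseEdge E u v) x y →
      Relation.TransGen F x y ∨
        (Relation.ReflTransGen F x v ∧ Relation.ReflTransGen F u y) := by
    intro x y h
    induction h with
    | single h =>
      rcases h with h | ⟨rfl, rfl⟩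
      · exact Or.inl (Relation.TransGen.single h)
      · exact Or.inr ⟨Relation.ReflTransGen.refl, Relation.ReflTransGen.refl⟩
    | tail _ hyz ih =>
      rcases hyz with hyz | ⟨rfl, rfl⟩
      · rcases ih with h1 | ⟨h1, h2⟩
        · exact Or.inl (h1.tail hyz)
        · exact Or.inr ⟨h1, h2.tail hyz⟩
      · rcases ih with h1 | ⟨h1, h2⟩
        · exact Or.inr ⟨h1.to_reflTransGen, Relation.ReflTransGen.refl⟩
        · exact Or.inr ⟨h1, Relation.ReflTransGen.refl⟩
  intro w hw
  rcases key hw with h1 | ⟨h1, h2⟩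
  · exact hE w (hmonoT h1)
  · have huvF : Relation.ReflTransGen F u v := h2.trans h1
    rcases (Relation.reflTransGen_iff_eq_or_transGen.mp huvF) with h | h
    · exact hne h.symm
    · -- take the last edge of the F-path from u to v
      obtain ⟨w', hw'1, hw'2⟩ := (Relation.TransGen.tail'_iff).mp h
      have hwne : w' ≠ u := by
        intro h'
        exact hw'2.2 ⟨h', rfl⟩
      have hwpav : w' ∈ pa E v := hw'2.1
      have : w' ∈ insert u (pa E u) := hpa ▸ hwpav
      have hwu : E w' u := by
        rcases this with h' | h'
        · exact absurd h' hwne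
        · exact h'
      rcases (Relation.reflTransGen_iff_eq_or_transGen.mp hw'1) with h' | h'
      · exact hwne h'
      · exact hE u ((hmonoT h').tail hwu)
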